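/- Fix an integer B ≥ 1 and a real β > 0, and for each integer n ≥ 3 set C_i(n) = C(n−3+i, i). Then the sequence n ↦ n · (∑_{i=0}^{B−1} C_i(n)·β^i) / (∑_{i=0}^{B} C_i(n)·β^i) tends to B/β as n → ∞. -/

import Mathlib

open Filter Finset

private lemma factor_tendsto (c : ℝ) :
    Tendsto (fun n : ℕ => ((n : ℝ) + c) / n) atTop (nhds 1) := by
  have h : Tendsto (fun n : ℕ => 1 + c * (1 / (n : ℝ))) atTop (nhds (1 + c * 0)) :=
    tendsto_const_nhds.add ((tendsto_one_div_atTop_nhds_zero_nat).const_mul c)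
  rw [mul_zero, add_zero] at h
  refine h.congr' ?_
  filter_upwards [eventually_ge_atTop 1] with n hn
  have hn' : (n : ℝ) ≠ 0 := by positivity
  field_simp

private lemma choose_div_tendsto (i : ℕ) :
    Tendsto (fun n : ℕ => (((n - 3 + i).choose i : ℝ)) / (n : ℝ) ^ i)
      atTop (nhds (1 / (i.factorial : ℝ))) := by
  have hprod : Tendsto (fun n : ℕ => ∏ j ∈ range i, (((n : ℝ) + ((i : ℝ) - 3 - j)) / n))
      atTop (nhds (∏ j ∈ range i, (1 : ℝ))) :=
    tendsto_finset_prod _ fun j _ => factor_tendsto _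
  rw [Finset.prod_const_one] at hprod
  have h := hprod.div_const (i.factorial : ℝ)
  refine h.congr' ?_
  filter_upwards [eventually_ge_atTop 3] with n hn
  have key : ((n - 3 + i).choose i : ℝ) * (i.factorial : ℝ) =
      ∏ j ∈ range i, ((n : ℝ) + ((i : ℝ) - 3 - j)) := by
    have h1 : ((n - 3 + i).descFactorial i : ℕ) = ∏ j ∈ range i, (n - 3 + i - j) :=
      Nat.descFactorial_eq_prod_range _ _
    have h2 : (n - 3 + i).descFactorial i = i.factorial * (n - 3 + i).choose i :=
      Nat.descFactorial_eq_factorial_mul_choose _ _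
    have := congrArg (fun m : ℕ => (m : ℝ)) (h2.symm.trans h1)
    push_cast at this
    rw [mul_comm] at this
    rw [this]
    refine Finset.prod_congr rfl fun j hj => ?_
    have hj' : j < i := Finset.mem_range.mp hj
    have : (n - 3 + i - j : ℕ) = n - 3 + (i - j) := by omega
    rw [this]
    have h3 : ((n - 3 : ℕ) : ℝ) = (n : ℝ) - 3 := by
      have : (3 : ℕ) ≤ n := hn
      push_cast [this]; ring
    push_cast [h3]
    have : ((i - j : ℕ) : ℝ) = (i : ℝ) - j := by
      push_cast [le_of_lt hj']; ring
    rw [this]; ring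
  have hfac : (i.factorial : ℝ) ≠ 0 := by positivity
  have hn0 : (n : ℝ) ≠ 0 := by positivity
  field_simp
  rw [Finset.prod_div_distrib, Finset.prod_const, card_range, div_mul_cancel₀ _ (pow_ne_zero _ hn0), ← key]
  ring

private lemma sum_div_tendsto (β : ℝ) (k : ℕ) :
    Tendsto (fun n : ℕ =>
        (∑ i ∈ range (k + 1), ((n - 3 + i).choose i : ℝ) * β ^ i) / (n : ℝ) ^ k)
      atTop (nhds (β ^ k / (k.factorial : ℝ))) := by
  have hterm : ∀ i ∈ range (k + 1),
      Tendsto (fun n : ℕ => ((n - 3 + i).choose i : ℝ) * β ^ i / (n : ℝ) ^ k)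
        atTop (nhds (if i = k then β ^ k / (k.factorial : ℝ) else 0)) := by
    intro i hi
    have hik : i ≤ k := Nat.lt_succ_iff.mp (Finset.mem_range.mp hi)
    rcases eq_or_lt_of_le hik with heq | hlt
    · subst heq
      simp only [if_pos rfl]
      have := (choose_div_tendsto i).mul_const (β ^ i)
      rw [one_div, inv_mul_eq_div] at this
      refine this.congr fun n => ?_
      ring
    · simp only [if_neg (Nat.ne_of_lt hlt)]
      have h1 := (choose_div_tendsto i).mul_const (β ^ i)
      have h2 : Tendsto (fun n : ℕ => (1 / (n : ℝ)) ^ (k - i)) atTop (nhds 0) := by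
        have := (tendsto_one_div_atTop_nhds_zero_nat (𝕜 := ℝ)).pow (k - i)
        rwa [zero_pow (by omega)] at this
      have h3 := h1.mul h2
      rw [mul_zero] at h3
      refine h3.congr' ?_
      filter_upwards [eventually_ge_atTop 1] with n hn
      have hn0 : (n : ℝ) ≠ 0 := by positivity
      have : (n : ℝ) ^ k = (n : ℝ) ^ i * (n : ℝ) ^ (k - i) := by
        rw [← pow_add]; congr 1; omega
      field_simp [this]
      rw [this, one_div_pow]; field_simp
  have hsum := tendsto_finset_sum (range (k + 1)) hterm
  rw [Finset.sum_ite_eq' (range (k + 1)) k _, if_pos (Finset.self_mem_range_succ k)] at hsum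
  refine hsum.congr fun n => ?_
  rw [Finset.sum_div]

/-- Scaling-law limit from the proof of Corollary 5 (Appendix E). -/
theorem stmt15 (B : ℕ) (hB : 1 ≤ B) (β : ℝ) (hβ : 0 < β) :
    Filter.Tendsto (fun n : ℕ => (n : ℝ) *
        ((∑ i ∈ Finset.range B, ((n - 3 + i).choose i : ℝ) * β ^ i)
          / ∑ i ∈ Finset.range (B + 1), ((n - 3 + i).choose i : ℝ) * β ^ i))
      Filter.atTop (nhds ((B : ℝ) / β)) := by
  obtain ⟨k, rfl⟩ : ∃ k, B = k + 1 := ⟨B - 1, by omega⟩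
  have hnum := sum_div_tendsto β k
  have hden := sum_div_tendsto β (k + 1)
  have hdenpos : ∀ n : ℕ, 0 < ∑ i ∈ range (k + 1 + 1), ((n - 3 + i).choose i : ℝ) * β ^ i := by
    intro n
    refine Finset.sum_pos (fun i hi => ?_) ⟨0, Finset.mem_range.mpr (by omega)⟩
    have : 0 < (n - 3 + i).choose i := Nat.choose_pos (by omega)
    positivity
  have hlim : (β ^ k / (k.factorial : ℝ)) / (β ^ (k + 1) / ((k + 1).factorial : ℝ))
      = ((k + 1 : ℕ) : ℝ) / β := by
    rw [Nat.factorial_succ]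
    have h1 : (k.factorial : ℝ) ≠ 0 := by positivity
    have h2 : β ≠ 0 := ne_of_gt hβ
    push_cast
    field_simp
    ring
  have h := hnum.div hden (by positivity)
  rw [hlim] at h
  refine h.congr' ?_
  filter_upwards [eventually_ge_atTop 1] with n hn
  have hn0 : (n : ℝ) ≠ 0 := by positivity
  have hd := (hdenpos n).ne'
  simp only [Pi.div_apply]
  rw [pow_succ]
  field_simp
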